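/- Let k be a field and let V and W be finitely generated FI-modules over k. Then the FI-module V ⊗ W, defined by (V ⊗ W)(S) = V(S) ⊗_k W(S) with the maps induced functorially by those of V and W, is a finitely generated FI-module. -/

import Mathlib

open CategoryTheory

/-- The category FI of finite sets and injections. -/
def FI : Type 1 := FintypeCat

instance : CoeSort FI Type := ⟨fun S => S.1⟩

noncomputable instance (S : FI) : Fintype S := @Fintype.ofFinite S S.2

instance : Category FI where
  Hom S T := {f : S → T // Function.Injective f}
  id S := ⟨id, fun _ _ h => h⟩
  comp f g := ⟨g.1 ∘ f.1, fun _ _ h => f.2 (g.2 h)⟩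

/-- A finite type, as an object of `FI`. -/
def FI.of (α : Type) [Fintype α] : FI := FintypeCat.of α

/-- An FI-module over `k` is a functor from `FI` to `k`-modules. -/
abbrev FIModule (k : Type) [CommRing k] := FI ⥤ ModuleCat.{0} k

variable {k : Type} [CommRing k]

/-- A sub-FI-module of an FI-module `V`. -/
structure SubFIModule (V : FIModule k) where
  carrier : ∀ S : FI, Submodule k (V.obj S)
  map_mem : ∀ {S T : FI} (f : S ⟶ T) (x : V.obj S), x ∈ carrier S → V.map f x ∈ carrier T

/-- An FI-module is finitely generated if some finite collection of elements
is contained in no proper sub-FI-module. -/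
def FIModule.FG (V : FIModule k) : Prop :=
  ∃ (ι : Type) (_ : Finite ι) (S : ι → FI) (v : ∀ i, V.obj (S i)),
    ∀ W : SubFIModule V, (∀ i, v i ∈ W.carrier (S i)) → ∀ T : FI, W.carrier T = ⊤


open scoped TensorProduct in
/-- The tensor product of two FI-modules, given by `(V ⊗ W)(S) = V(S) ⊗ₖ W(S)`. -/
noncomputable def FIModule.tensor (V W : FIModule k) : FIModule k where
  obj S := ModuleCat.of k (V.obj S ⊗[k] W.obj S)
  map {S T} f := ModuleCat.ofHom (TensorProduct.map (V.map f).hom (W.map f).hom)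
  map_id S := by
    ext : 1
    simp [ModuleCat.hom_id, ModuleCat.hom_ofHom, TensorProduct.map_id]
  map_comp f g := by
    ext : 1
    simp [ModuleCat.hom_comp, ModuleCat.hom_ofHom, TensorProduct.map_comp]

open scoped TensorProduct

instance (S T : FI) : Finite (S ⟶ T) :=
  inferInstanceAs (Finite {f : S → T // Function.Injective f})

/-- The sub-FI-module generated by a family is spanned degreewise by pushforwards. -/
lemma fg_span (V : FIModule k) {ι : Type} [Finite ι] (S : ι → FI) (v : ∀ i, V.obj (S i))
    (h : ∀ W' : SubFIModule V, (∀ i, v i ∈ W'.carrier (S i)) → ∀ T, W'.carrier T = ⊤)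
    (U : FI) :
    Submodule.span k {x : V.obj U | ∃ i, ∃ f : S i ⟶ U, V.map f (v i) = x} = ⊤ := by
  let W' : SubFIModule V :=
    { carrier := fun U => Submodule.span k {x : V.obj U | ∃ i, ∃ f : S i ⟶ U, V.map f (v i) = x}
      map_mem := by
        intro A B f x hx
        have hle : Submodule.map (V.map f).hom
            (Submodule.span k {x : V.obj A | ∃ i, ∃ g : S i ⟶ A, V.map g (v i) = x}) ≤
            Submodule.span k {x : V.obj B | ∃ i, ∃ g : S i ⟶ B, V.map g (v i) = x} := by
          rw [Submodule.map_span, Submodule.span_le]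
          rintro _ ⟨_, ⟨i, g, rfl⟩, rfl⟩
          refine Submodule.subset_span ⟨i, g ≫ f, ?_⟩
          rw [V.map_comp]; rfl
        exact hle (Submodule.mem_map_of_mem hx) }
  exact h W' (fun i => Submodule.subset_span ⟨i, 𝟙 _, by rw [V.map_id]; rfl⟩) U

theorem stmt4 {k : Type} [Field k] (V W : FIModule k) (hV : V.FG) (hW : W.FG) :
    (V.tensor W).FG := by
  classical
  obtain ⟨ι, hι, S, v, hv⟩ := hV
  obtain ⟨κ, hκ, T', w, hw⟩ := hW
  refine ⟨(i : ι) × (j : κ) ×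
      (d : Fin (Fintype.card (S i) + Fintype.card (T' j) + 1)) ×
      (S i ⟶ FI.of (Fin d)) × (T' j ⟶ FI.of (Fin d)), inferInstance,
    fun p => FI.of (Fin p.2.2.1),
    fun p => (V.map p.2.2.2.1 (v p.1)) ⊗ₜ[k] (W.map p.2.2.2.2 (w p.2.1)), ?_⟩
  intro W' hW' U
  -- key claim: all pure tensors of pushforwards are in W'
  have key : ∀ (i : ι) (j : κ) (f : S i ⟶ U) (g : T' j ⟶ U),
      ((V.map f (v i)) ⊗ₜ[k] (W.map g (w j)) : V.obj U ⊗[k] W.obj U) ∈ W'.carrier U := by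
    intro i j f g
    set s : Finset U := Finset.image f.1 Finset.univ ∪ Finset.image g.1 Finset.univ with hs
    have hd : s.card ≤ Fintype.card (S i) + Fintype.card (T' j) := by
      refine le_trans (Finset.card_union_le _ _) (add_le_add ?_ ?_) <;>
        exact le_trans (Finset.card_image_le) (by simp)
    let d : Fin (Fintype.card (S i) + Fintype.card (T' j) + 1) :=
      ⟨s.card, Nat.lt_succ_of_le hd⟩
    let e : s ≃ Fin s.card := s.equivFin
    have hfmem : ∀ a : S i, f.1 a ∈ s := fun a => by
      simp [hs, Finset.mem_union, Finset.mem_image]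
    have hgmem : ∀ a : T' j, g.1 a ∈ s := fun a => by
      simp [hs, Finset.mem_union, Finset.mem_image]
    let f₀ : S i ⟶ FI.of (Fin d) := ⟨fun a => e ⟨f.1 a, hfmem a⟩, by
      intro a b hab
      apply f.2
      have := e.injective hab
      exact congrArg Subtype.val this⟩
    let g₀ : T' j ⟶ FI.of (Fin d) := ⟨fun a => e ⟨g.1 a, hgmem a⟩, by
      intro a b hab
      apply g.2
      have := e.injective hab
      exact congrArg Subtype.val this⟩
    let h : FI.of (Fin d) ⟶ U := ⟨fun a => ((e.symm a : s) : U), by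
      intro a b hab
      exact e.symm.injective (Subtype.ext hab)⟩
    have hcompf : f₀ ≫ h = f := by
      apply Subtype.ext
      funext a
      show ((e.symm (e ⟨f.1 a, hfmem a⟩) : s) : U) = f.1 a
      rw [Equiv.symm_apply_apply]
    have hcompg : g₀ ≫ h = g := by
      apply Subtype.ext
      funext a
      show ((e.symm (e ⟨g.1 a, hgmem a⟩) : s) : U) = g.1 a
      rw [Equiv.symm_apply_apply]
    have hmem := W'.map_mem h _ (hW' ⟨i, j, d, f₀, g₀⟩)
    have heq : (V.tensor W).map h
        ((V.map f₀ (v i)) ⊗ₜ[k] (W.map g₀ (w j)))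
        = (V.map f (v i)) ⊗ₜ[k] (W.map g (w j)) := by
      show TensorProduct.map (V.map h).hom (W.map h).hom
        ((V.map f₀ (v i)) ⊗ₜ[k] (W.map g₀ (w j))) = _
      rw [TensorProduct.map_tmul]
      rw [show (V.map h) (V.map f₀ (v i)) = V.map (f₀ ≫ h) (v i) by rw [V.map_comp]; rfl]
      rw [show (W.map h) (W.map g₀ (w j)) = W.map (g₀ ≫ h) (w j) by rw [W.map_comp]; rfl]
      rw [hcompf, hcompg]
    rw [heq] at hmem
    exact hmem
  -- now span arguments
  rw [eq_top_iff]
  intro x _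
  have hVU := fg_span V S v hv U
  have hWU := fg_span W T' w hw U
  have hx : x ∈ (⊤ : Submodule k (V.obj U ⊗[k] W.obj U)) := trivial
  rw [← TensorProduct.span_tmul_eq_top] at hx
  refine Submodule.span_induction (p := fun x _ => x ∈ W'.carrier U) ?_ ?_ ?_ ?_ hx
  · rintro _ ⟨m, n, rfl⟩
    have hm : m ∈ (⊤ : Submodule k (V.obj U)) := trivial
    rw [← hVU] at hm
    have goal : ∀ m ∈ Submodule.span k {x : V.obj U | ∃ i, ∃ f : S i ⟶ U, V.map f (v i) = x},
        ∀ n : W.obj U, (m ⊗ₜ[k] n : V.obj U ⊗[k] W.obj U) ∈ W'.carrier U := by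
      intro m hm
      refine Submodule.span_induction ?_ ?_ ?_ ?_ hm
      · rintro _ ⟨i, f, rfl⟩ n
        have hn : n ∈ (⊤ : Submodule k (W.obj U)) := trivial
        rw [← hWU] at hn
        refine Submodule.span_induction ?_ ?_ ?_ ?_ hn
        · rintro _ ⟨j, g, rfl⟩
          exact key i j f g
        · rw [TensorProduct.tmul_zero]; exact (W'.carrier U).zero_mem
        · intro a b _ _ ha hb
          rw [TensorProduct.tmul_add]; exact (W'.carrier U).add_mem ha hb
        · intro c a _ ha
          rw [TensorProduct.tmul_smul]; exact (W'.carrier U).smul_mem c ha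
      · intro n
        rw [TensorProduct.zero_tmul]; exact (W'.carrier U).zero_mem
      · intro a b _ _ ha hb n
        rw [TensorProduct.add_tmul]; exact (W'.carrier U).add_mem (ha n) (hb n)
      · intro c a _ ha n
        rw [← TensorProduct.smul_tmul']; exact (W'.carrier U).smul_mem c (ha n)
    exact goal m hm n
  · exact (W'.carrier U).zero_mem
  · intro a b _ _ ha hb
    exact (W'.carrier U).add_mem ha hb
  · intro c a _ ha
    exact (W'.carrier U).smul_mem c ha
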